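/- Let 𝔤 be a 4-dimensional real Lie algebra with inner product, orthonormal basis {X,Y,Z,W}, and J with JX=Y, JY=−X, JZ=W, JW=−Z. Let N be the Nijenhuis tensor. If g(JW', N(V,U)) + g(JV, N(U,W')) + g(JU, N(V,W')) = 0 for all U,V,W' ∈ 𝔤, then N = 0. -/

import Mathlib

/-- On a 4-dimensional real Lie algebra with orthonormal basis `{X,Y,Z,W}`
and `J` given by `JX = Y, JY = −X, JZ = W, JW = −Z`, if the Nijenhuis tensor `N`
satisfies `g(JW', N(V,U)) + g(JV, N(U,W')) + g(JU, N(V,W')) = 0` for all `U, V, W'`,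
then `N = 0`. -/
theorem nijenhuis_vanishes_of_cyclic_condition
    {V : Type*} [NormedAddCommGroup V] [InnerProductSpace ℝ V] [FiniteDimensional ℝ V]
    (b : OrthonormalBasis (Fin 4) ℝ V)
    (X Y Z W : V) (hX : X = b 0) (hY : Y = b 1) (hZ : Z = b 2) (hW : W = b 3)
    (lb : V →ₗ[ℝ] V →ₗ[ℝ] V)
    (hskew : ∀ U U' : V, lb U U' = - lb U' U)
    (hjacobi : ∀ U U' U'' : V,
      lb (lb U U') U'' + lb (lb U' U'') U + lb (lb U'' U) U' = 0)
    (J : V →ₗ[ℝ] V)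
    (hJX : J X = Y) (hJY : J Y = -X) (hJZ : J Z = W) (hJW : J W = -Z)
    (N : V → V → V)
    (hN : ∀ U U' : V,
      N U U' = lb U U' + J (lb (J U) U') + J (lb U (J U')) - lb (J U) (J U'))
    (hcyc : ∀ U V' W' : V,
      (inner ℝ (J W') (N V' U) : ℝ) + inner ℝ (J V') (N U W') + inner ℝ (J U) (N V' W') = 0) :
    ∀ U U' : V, N U U' = 0 := by
  subst hX hY hZ hW
  -- J on the basis
  have hJ0 : J (b 0) = b 1 := hJX
  have hJ1 : J (b 1) = -b 0 := hJY
  have hJ2' : J (b 2) = b 3 := hJZ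
  have hJ3 : J (b 3) = -b 2 := hJW
  -- J squared is -1
  have hJJ : ∀ u : V, J (J u) = -u := by
    have : J ∘ₗ J = -LinearMap.id := by
      apply b.toBasis.ext
      intro i
      fin_cases i <;>
        simp [hJ0, hJ1, hJ2', hJ3]
    intro u
    have := LinearMap.congr_fun this u
    simpa using this
  -- J is orthogonal
  have hbij : ∀ i j, (inner ℝ (b i) (b j) : ℝ) = if i = j then 1 else 0 :=
    orthonormal_iff_ite.mp b.orthonormal
  have horth : ∀ u v : V, (inner ℝ (J u) (J v) : ℝ) = inner ℝ u v := by
    have hΦ : (LinearMap.compl₁₂ (innerₗ V) J J)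
        - innerₗ V = 0 := by
      apply b.toBasis.ext
      intro i
      apply b.toBasis.ext
      intro j
      fin_cases i <;> fin_cases j <;>
        simp [LinearMap.compl₁₂_apply, innerₗ_apply_apply, hJ0, hJ1, hJ2', hJ3,
          hbij, inner_neg_left, inner_neg_right]
    intro u v
    have := LinearMap.congr_fun (LinearMap.congr_fun hΦ u) v
    simpa [LinearMap.compl₁₂_apply, innerₗ_apply_apply, sub_eq_zero] using this
  -- N is antisymmetric
  have hNanti : ∀ u v : V, N v u = -N u v := by
    intro u v
    rw [hN, hN, hskew v u, hskew (J v) u, hskew v (J u), hskew (J v) (J u)]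
    simp only [map_neg]
    abel
  -- N (u, J w) = - J (N u w)
  have hNJ : ∀ u w : V, N u (J w) = -J (N u w) := by
    intro u w
    rw [hN, hN]
    simp only [hJJ, map_neg, map_add, map_sub]
    abel
  -- key identity without J
  have key : ∀ u v w : V,
      (inner ℝ w (N v u) : ℝ) + inner ℝ v (N u w) + inner ℝ u (N v w) = 0 := by
    intro u v w
    have h := hcyc u v (J w)
    rw [hJJ w, hNJ u w, hNJ v w] at h
    rw [inner_neg_left, inner_neg_right, inner_neg_right, horth, horth] at h
    linarith
  intro u v
  have h1 := key v u (N u v)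
  have h2 := key u v (N u v)
  rw [hNanti u v] at h2
  simp only [inner_neg_right, inner_neg_left] at h1 h2
  have : (inner ℝ (N u v) (N u v) : ℝ) = 0 := by linarith
  exact inner_self_eq_zero.mp this
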